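/- arXiv:2502.10853 — 3 statements merged into one kernel-verified Lean document; each statement's English description precedes it below -/
import Mathlib

section
/- Let A_S have full column rank and define x*_S − x̃_S = (A_S^⊤ A_S)^{−1}(A_S^⊤ η − λ·sign(x*_S)). If ‖(A_S^⊤ A_S)^{−1}‖_∞ · (‖A_S^⊤ η‖_∞ + λ) ≤ min_{i∈S} |x̃_i|, then sign(x*_S) = sign(x̃_S). -/
open Matrix BigOperators Finset

noncomputable section

/-- ℓ1 norm of a finitely-indexed real vector. -/
def l1 {ι : Type*} [Fintype ι] (v : ι → ℝ) : ℝ := ∑ i, |v i|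

/-- Squared ℓ2 norm. -/
def l2sq {ι : Type*} [Fintype ι] (v : ι → ℝ) : ℝ := ∑ i, (v i) ^ 2

/-- ℓ∞ norm (max absolute entry). -/
def linf {ι : Type*} [Fintype ι] (v : ι → ℝ) : ℝ := ⨆ i, |v i|

/-- Euclidean inner product. -/
def ip {ι : Type*} [Fintype ι] (u v : ι → ℝ) : ℝ := ∑ i, u i * v i

/-- Restriction of a vector to an index set (coordinates outside `S` set to zero). -/
def restr {n : ℕ} (S : Finset (Fin n)) (v : Fin n → ℝ) : Fin n → ℝ :=
  fun i => if i ∈ S then v i else 0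

/-- Operator norm induced by the vector ∞-norm: max row ℓ1-sum. -/
def opInf {ι κ : Type*} [Fintype ι] [Fintype κ] (M : Matrix ι κ ℝ) : ℝ :=
  ⨆ i, ∑ j, |M i j|

/-- Operator norm induced by the vector 1-norm: max column ℓ1-sum. -/
def op1 {ι κ : Type*} [Fintype ι] [Fintype κ] (M : Matrix ι κ ℝ) : ℝ :=
  ⨆ j, ∑ i, |M i j|

lemma aux_abs_sign_le_one (x : ℝ) : |Real.sign x| ≤ 1 := by
  rcases lt_trichotomy x 0 with h | h | h
  · rw [Real.sign_of_neg h]; norm_num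
  · rw [h, Real.sign_zero]; norm_num
  · rw [Real.sign_of_pos h]; norm_num

theorem stmt8 {m k : ℕ} (A : Matrix (Fin m) (Fin k) ℝ) (hrank : A.rank = k)
    (xt xstar : Fin k → ℝ) (η : Fin m → ℝ) (lam : ℝ) (hlam : 0 < lam)
    (hxt : ∀ i, xt i ≠ 0)
    (hdef : ∀ i, xstar i - xt i =
      ((Aᵀ * A)⁻¹ *ᵥ (Aᵀ *ᵥ η - lam • fun j => Real.sign (xstar j))) i)
    (hcond : opInf (Aᵀ * A)⁻¹ * (linf (Aᵀ *ᵥ η) + lam) ≤ ⨅ i, |xt i|) :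
    ∀ i, Real.sign (xstar i) = Real.sign (xt i) := by
  intro i
  haveI : Nonempty (Fin k) := ⟨i⟩
  -- injectivity of A from the rank assumption
  have hkerA : ∀ x : Fin k → ℝ, A *ᵥ x = 0 → x = 0 := by
    intro x hx
    have h1 := LinearMap.finrank_range_add_finrank_ker A.mulVecLin
    rw [show Module.finrank ℝ (LinearMap.range A.mulVecLin) = A.rank from rfl, hrank,
      Module.finrank_pi] at h1
    simp only [Fintype.card_fin] at h1
    have hker : LinearMap.ker A.mulVecLin = ⊥ := Submodule.finrank_eq_zero.mp (by omega)
    have : x ∈ LinearMap.ker A.mulVecLin := by simpa [Matrix.mulVecLin_apply] using hx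
    simpa [hker] using this
  -- positive definiteness of AᵀA and its inverse
  have hPD : (Aᵀ * A).PosDef := by
    have hps : (Aᵀ * A).PosSemidef := by
      have := Matrix.posSemidef_conjTranspose_mul_self A
      rwa [Matrix.conjTranspose_eq_transpose_of_trivial] at this
    refine .of_dotProduct_mulVec_pos hps.1 (fun x hx => ?_)
    rcases lt_or_eq_of_le (hps.dotProduct_mulVec_nonneg x) with h | h
    · exact h
    · exfalso
      have h0 : (Aᵀ * A) *ᵥ x = 0 := (hps.dotProduct_mulVec_zero_iff x).mp h.symm
      have hm : x ∈ LinearMap.ker (Aᵀ * A).mulVecLin := LinearMap.mem_ker.mpr (by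
        rw [Matrix.mulVecLin_apply]; exact h0)
      rw [Matrix.ker_mulVecLin_transpose_mul_self] at hm
      have := LinearMap.mem_ker.mp hm
      rw [Matrix.mulVecLin_apply] at this
      exact hx (hkerA x this)
  set M : Matrix (Fin k) (Fin k) ℝ := (Aᵀ * A)⁻¹ with hM
  have hMii : 0 < M i i := by
    have := hPD.inv.dotProduct_mulVec_pos (x := Pi.single i 1) (by intro h; simpa using congrFun h i)
    simpa [hM, Matrix.mulVec, dotProduct, Pi.single_apply] using this
  set b : Fin k → ℝ := Aᵀ *ᵥ η - lam • fun j => Real.sign (xstar j) with hb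
  set L : ℝ := linf (Aᵀ *ᵥ η) with hL
  -- basic sup/inf facts
  have hlinf_le : ∀ j : Fin k, |(Aᵀ *ᵥ η) j| ≤ L := by
    intro j
    simp only [hL, linf]
    exact le_ciSup (f := fun l => |(Aᵀ *ᵥ η) l|) (Set.Finite.bddAbove (Set.finite_range _)) j
  have hL0 : 0 ≤ L := le_trans (abs_nonneg _) (hlinf_le i)
  have hrow : ∑ j, |M i j| ≤ opInf M := by
    simp only [opInf]
    exact le_ciSup (f := fun l => ∑ j, |M l j|) (Set.Finite.bddAbove (Set.finite_range _)) i
  have hinf_le : (⨅ j, |xt j|) ≤ |xt i| :=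
    ciInf_le (Set.Finite.bddBelow (Set.finite_range _)) i
  -- bound on entries of b
  have hbj : ∀ j, |b j| ≤ L + lam := by
    intro j
    have : |b j| ≤ |(Aᵀ *ᵥ η) j| + lam * |Real.sign (xstar j)| := by
      simp only [hb, Pi.sub_apply, Pi.smul_apply, smul_eq_mul]
      calc |(Aᵀ *ᵥ η) j - lam * Real.sign (xstar j)|
          ≤ |(Aᵀ *ᵥ η) j| + |lam * Real.sign (xstar j)| := abs_sub _ _
        _ = |(Aᵀ *ᵥ η) j| + lam * |Real.sign (xstar j)| := by
            rw [abs_mul, abs_of_pos hlam]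
    have h2 : lam * |Real.sign (xstar j)| ≤ lam :=
      (mul_le_of_le_one_right hlam.le (aux_abs_sign_le_one _))
    have := hlinf_le j
    linarith
  have hMb : ∀ l, |(M *ᵥ b) l| ≤ ∑ j, |M l j| * |b j| := by
    intro l
    calc |(M *ᵥ b) l| = |∑ j, M l j * b j| := by rw [Matrix.mulVec, dotProduct]
      _ ≤ ∑ j, |M l j * b j| := Finset.abs_sum_le_sum_abs _ _
      _ = ∑ j, |M l j| * |b j| := by simp [abs_mul]
  have hcond' : opInf M * (L + lam) ≤ ⨅ j, |xt j| := hcond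
  have hsum_le : ∑ j, |M i j| * (L + lam) ≤ opInf M * (L + lam) := by
    rw [← Finset.sum_mul]
    exact mul_le_mul_of_nonneg_right hrow (by linarith)
  by_cases hx0 : xstar i = 0
  · -- contradiction using strict positivity of M i i
    exfalso
    have hbi : |b i| ≤ L := by
      have : b i = (Aᵀ *ᵥ η) i := by simp [hb, hx0]
      rw [this]; exact hlinf_le i
    have hxti : |xt i| = |(M *ᵥ b) i| := by
      have := hdef i
      rw [hx0] at this
      rw [show xt i = -((M *ᵥ b) i) by linarith, abs_neg]
    have key : ∑ j, |M i j| * |b j| ≤ ∑ j, |M i j| * (L + lam) - M i i * lam := by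
      have : ∑ j, |M i j| * |b j|
          ≤ ∑ j, (|M i j| * (L + lam) - if j = i then M i i * lam else 0) := by
        apply Finset.sum_le_sum
        intro j _
        by_cases hji : j = i
        · subst hji
          rw [if_pos rfl, abs_of_pos hMii]
          have h3 : M j j * |b j| ≤ M j j * L :=
            mul_le_mul_of_nonneg_left hbi hMii.le
          nlinarith
        · simp only [if_neg hji, sub_zero]
          exact mul_le_mul_of_nonneg_left (hbj j) (abs_nonneg _)
      rw [Finset.sum_sub_distrib, Finset.sum_ite_eq' Finset.univ i
        (fun _ => M i i * lam)] at this
      simpa using this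
    have h1 : |xt i| ≤ opInf M * (L + lam) - M i i * lam := by
      have := hMb i
      rw [← hxti] at this
      linarith [key, hsum_le]
    have h2 : M i i * lam > 0 := mul_pos hMii hlam
    linarith [hinf_le, hcond']
  · -- signs agree
    have hbnd : |xstar i - xt i| ≤ |xt i| := by
      have h1 : |xstar i - xt i| ≤ ∑ j, |M i j| * |b j| := by
        rw [hdef i]; exact hMb i
      have h2 : ∑ j, |M i j| * |b j| ≤ ∑ j, |M i j| * (L + lam) :=
        Finset.sum_le_sum fun j _ => mul_le_mul_of_nonneg_left (hbj j) (abs_nonneg _)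
      linarith [hinf_le, hcond', hsum_le]
    rcases lt_trichotomy (xt i) 0 with h | h | h
    · have : xstar i < 0 := by
        rcases abs_le.mp hbnd with ⟨hlo, hhi⟩
        rw [abs_of_neg h] at hlo hhi
        rcases lt_or_eq_of_le (by linarith : xstar i ≤ 0) with h' | h'
        · exact h'
        · exact absurd h' hx0
      rw [Real.sign_of_neg this, Real.sign_of_neg h]
    · exact absurd h (hxt i)
    · have : 0 < xstar i := by
        rcases abs_le.mp hbnd with ⟨hlo, hhi⟩
        rw [abs_of_pos h] at hlo hhi
        rcases lt_or_eq_of_le (by linarith : 0 ≤ xstar i) with h' | h'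
        · exact h'
        · exact absurd h'.symm hx0
      rw [Real.sign_of_pos this, Real.sign_of_pos h]
end
end

section
/- (Lemma 1 of the paper) Let x̃_S ∈ [−d,d]^k with all entries nonzero, μ = (1/d)·min_{i∈S}|x̃_i| ∈ (0,1], η ∈ R^m, λ > 0 with A_S^⊤A_S − λI invertible, and define x*_S = x̃_S + (A_S^⊤ A_S − λI)^{−1}[λ x̃_S − λd·sign(x̃_S) + A_S^⊤ η]. If ‖(A_S^⊤ A_S − λI)^{−1}‖_∞ · [λd(1−μ) + ‖A_S^⊤ η‖_∞] ≤ μd (with strict inequality, or nonstrict and concluding sign agreement on nonzero coordinates), then sign(x*_S) = sign(x̃_S). -/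
open Matrix BigOperators Finset

noncomputable section

lemma abs_le_linf {ι : Type*} [Fintype ι] (v : ι → ℝ) (i : ι) : |v i| ≤ linf v := by
  rw [linf]; exact le_ciSup (f := fun i => |v i|) (Set.Finite.bddAbove (Set.finite_range _)) i

theorem stmt10 {m k : ℕ} (A : Matrix (Fin m) (Fin k) ℝ)
    (xt xstar : Fin k → ℝ) (η : Fin m → ℝ) (lam d μ : ℝ)
    (hd : 0 < d) (hlam : 0 < lam)
    (hxt : ∀ i, xt i ≠ 0) (hbox : ∀ i, |xt i| ≤ d)
    (hμ : μ = (1 / d) * ⨅ i, |xt i|) (hμ0 : 0 < μ) (hμ1 : μ ≤ 1)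
    (hinv : IsUnit (Aᵀ * A - lam • (1 : Matrix (Fin k) (Fin k) ℝ)).det)
    (hdef : xstar = xt + (Aᵀ * A - lam • (1 : Matrix (Fin k) (Fin k) ℝ))⁻¹ *ᵥ
      (lam • xt - (lam * d) • (fun i => Real.sign (xt i)) + Aᵀ *ᵥ η))
    (hcond : opInf (Aᵀ * A - lam • (1 : Matrix (Fin k) (Fin k) ℝ))⁻¹ *
        (lam * d * (1 - μ) + linf (Aᵀ *ᵥ η)) < μ * d) :
    ∀ i, Real.sign (xstar i) = Real.sign (xt i) := by
  intro i
  have hne : Nonempty (Fin k) := ⟨i⟩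
  set M := (Aᵀ * A - lam • (1 : Matrix (Fin k) (Fin k) ℝ))⁻¹ with hM
  set v : Fin k → ℝ :=
    lam • xt - (lam * d) • (fun i => Real.sign (xt i)) + Aᵀ *ᵥ η with hv
  set L : ℝ := lam * d * (1 - μ) + linf (Aᵀ *ᵥ η) with hL
  -- lower bound on |xt j|
  have hlo : ∀ j, μ * d ≤ |xt j| := by
    intro j
    have h1 : (⨅ j, |xt j|) ≤ |xt j| :=
      ciInf_le (Set.Finite.bddBelow (Set.finite_range _)) j
    have : μ * d = ⨅ j, |xt j| := by
      rw [hμ]; field_simp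
    linarith
  -- bound on each entry of v
  have hvj : ∀ j, |v j| ≤ L := by
    intro j
    have hsgn : |xt j - d * Real.sign (xt j)| ≤ d * (1 - μ) := by
      rcases lt_trichotomy (xt j) 0 with hj | hj | hj
      · rw [Real.sign_of_neg hj]
        have h1 : |xt j| = -(xt j) := abs_of_neg hj
        have h2 := hlo j
        have h3 := hbox j
        rw [abs_le]; constructor <;> nlinarith
      · exact absurd hj (hxt j)
      · rw [Real.sign_of_pos hj]
        have h1 : |xt j| = xt j := abs_of_pos hj
        have h2 := hlo j
        have h3 := hbox j
        rw [abs_le]; constructor <;> nlinarith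
    have hη : |(Aᵀ *ᵥ η) j| ≤ linf (Aᵀ *ᵥ η) := abs_le_linf _ j
    have : v j = lam * (xt j - d * Real.sign (xt j)) + (Aᵀ *ᵥ η) j := by
      simp [hv]; ring
    rw [this]
    calc |lam * (xt j - d * Real.sign (xt j)) + (Aᵀ *ᵥ η) j|
        ≤ |lam * (xt j - d * Real.sign (xt j))| + |(Aᵀ *ᵥ η) j| := abs_add_le _ _
      _ ≤ lam * (d * (1 - μ)) + linf (Aᵀ *ᵥ η) := by
          rw [abs_mul, abs_of_pos hlam]
          exact add_le_add (by nlinarith) hη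
      _ = L := by rw [hL]; ring
  have hL0 : 0 ≤ L := by
    have := (abs_nonneg ((Aᵀ *ᵥ η) i)).trans (abs_le_linf (Aᵀ *ᵥ η) i)
    have : 0 ≤ lam * d * (1 - μ) := by nlinarith [mul_pos hlam hd]
    nlinarith [(abs_nonneg ((Aᵀ *ᵥ η) i)).trans (abs_le_linf (Aᵀ *ᵥ η) i)]
  -- bound the perturbation
  have hpert : |xstar i - xt i| ≤ opInf M * L := by
    have hdi : xstar i - xt i = (M *ᵥ v) i := by
      rw [hdef]; simp [hM, hv]
    rw [hdi]
    calc |(M *ᵥ v) i| = |∑ j, M i j * v j| := by rw [mulVec, dotProduct]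
      _ ≤ ∑ j, |M i j * v j| := Finset.abs_sum_le_sum_abs _ _
      _ ≤ ∑ j, |M i j| * L := by
          apply Finset.sum_le_sum
          intro j _
          rw [abs_mul]
          exact mul_le_mul_of_nonneg_left (hvj j) (abs_nonneg _)
      _ = (∑ j, |M i j|) * L := by rw [Finset.sum_mul]
      _ ≤ opInf M * L := by
          apply mul_le_mul_of_nonneg_right _ hL0
          rw [opInf]
          exact le_ciSup (f := fun i => ∑ j, |M i j|) (Set.Finite.bddAbove (Set.finite_range _)) i
  have hfinal : |xstar i - xt i| < μ * d := lt_of_le_of_lt hpert hcond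
  have hlo' := hlo i
  rcases lt_trichotomy (xt i) 0 with hj | hj | hj
  · have h1 : |xt i| = -(xt i) := abs_of_neg hj
    have h2 : xstar i < 0 := by
      have := abs_lt.mp hfinal
      nlinarith [this.2]
    rw [Real.sign_of_neg hj, Real.sign_of_neg h2]
  · exact absurd hj (hxt i)
  · have h1 : |xt i| = xt i := abs_of_pos hj
    have h2 : 0 < xstar i := by
      have := abs_lt.mp hfinal
      nlinarith [this.1]
    rw [Real.sign_of_pos hj, Real.sign_of_pos h2]
end
end

section
/- (Theorem 1, noise-free core inequality) Let η = 0, y = Ax̃, x̃ supported on S with entries in [−d,d] and min nonzero magnitude μd, A_S full column rank, A_S^⊤A_S − λI invertible, and x* defined by x*_S = x̃_S + (A_S^⊤A_S − λI)^{−1}[λx̃_S − λd·sign(x*_S)], x*_{S̄} = 0, with sign(x*_S) = sign(x̃_S). Suppose: (i) ‖A_S^† A_{S̄}‖_1 < 1/ω; (ii) ‖Av‖_2² ≥ φ‖v‖_2² for all nonzero v ∈ C(α,S) with φ > λ; (iii) q := λd − (1/ω)‖A_S^⊤A_S(A_S^⊤A_S − λI)^{−1}‖_∞ · λd(1−μ)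 > λε(1+α)/α for some ε > 0. Then for every h ≠ 0 with ‖h‖_∞ ≤ ε and |h_i| < |x*_i| for i ∈ S, F(x*+h) > F(x*), where F(x) = (1/2)‖y − Ax‖_2² + λ(d‖x‖_1 − (1/2)‖x‖_2²). -/
open Matrix BigOperators Finset

noncomputable section

lemma linf_nonneg {ι : Type*} [Fintype ι] (v : ι → ℝ) : 0 ≤ linf v :=
  Real.iSup_nonneg fun i => abs_nonneg _

lemma linf_le {ι : Type*} [Fintype ι] (v : ι → ℝ) {a : ℝ} (h : ∀ i, |v i| ≤ a) (ha : 0 ≤ a) :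
    linf v ≤ a := Real.iSup_le h ha

lemma opInf_nonneg {ι κ : Type*} [Fintype ι] [Fintype κ] (M : Matrix ι κ ℝ) : 0 ≤ opInf M :=
  Real.iSup_nonneg fun _ => Finset.sum_nonneg fun _ _ => abs_nonneg _

lemma op1_nonneg {ι κ : Type*} [Fintype ι] [Fintype κ] (M : Matrix ι κ ℝ) : 0 ≤ op1 M :=
  Real.iSup_nonneg fun _ => Finset.sum_nonneg fun _ _ => abs_nonneg _

lemma opInf_transpose {ι κ : Type*} [Fintype ι] [Fintype κ] (M : Matrix ι κ ℝ) :
    opInf Mᵀ = op1 M := rfl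

lemma row_sum_le_opInf {ι κ : Type*} [Fintype ι] [Fintype κ] (M : Matrix ι κ ℝ) (i : ι) :
    ∑ j, |M i j| ≤ opInf M :=
  le_ciSup (f := fun i => ∑ j, |M i j|) (Set.Finite.bddAbove (Set.finite_range _)) i

lemma abs_mulVec_le {ι κ : Type*} [Fintype ι] [Fintype κ] (M : Matrix ι κ ℝ) (v : κ → ℝ)
    (i : ι) : |(M *ᵥ v) i| ≤ opInf M * linf v := by
  calc |(M *ᵥ v) i| ≤ ∑ j, |M i j * v j| := Finset.abs_sum_le_sum_abs _ _
    _ ≤ ∑ j, |M i j| * linf v := by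
        refine Finset.sum_le_sum fun j _ => ?_
        rw [abs_mul]
        exact mul_le_mul_of_nonneg_left (abs_le_linf v j) (abs_nonneg _)
    _ = (∑ j, |M i j|) * linf v := by rw [Finset.sum_mul]
    _ ≤ opInf M * linf v :=
        mul_le_mul_of_nonneg_right (row_sum_le_opInf M i) (linf_nonneg v)

lemma linf_mulVec_le {ι κ : Type*} [Fintype ι] [Fintype κ] (M : Matrix ι κ ℝ) (v : κ → ℝ) :
    linf (M *ᵥ v) ≤ opInf M * linf v :=
  linf_le _ (abs_mulVec_le M v) (mul_nonneg (opInf_nonneg M) (linf_nonneg v))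

lemma isUnit_det_of_rank_eq_card {k : Type*} [Fintype k] [DecidableEq k] (G : Matrix k k ℝ)
    (h : G.rank = Fintype.card k) : IsUnit G.det := by
  rw [← isUnit_iff_isUnit_det, ← mulVec_surjective_iff_isUnit]
  have hrange : LinearMap.range G.mulVecLin = ⊤ := by
    apply Submodule.eq_top_of_finrank_eq
    rw [← Matrix.rank, h, Module.finrank_fintype_fun_eq_card]
  intro v
  exact LinearMap.range_eq_top.mp hrange v

lemma l2sq_sub {ι : Type*} [Fintype ι] (u v : ι → ℝ) :
    l2sq (u - v) = l2sq u - 2 * ip u v + l2sq v := by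
  simp only [l2sq, ip, Pi.sub_apply, ← Finset.sum_add_distrib, ← Finset.sum_sub_distrib,
    Finset.mul_sum]
  exact Finset.sum_congr rfl fun i _ => by ring

lemma l2sq_add {ι : Type*} [Fintype ι] (u v : ι → ℝ) :
    l2sq (u + v) = l2sq u + 2 * ip u v + l2sq v := by
  simp only [l2sq, ip, Pi.add_apply, ← Finset.sum_add_distrib, Finset.mul_sum]
  exact Finset.sum_congr rfl fun i _ => by ring

lemma l2sq_nonneg {ι : Type*} [Fintype ι] (v : ι → ℝ) : 0 ≤ l2sq v :=
  Finset.sum_nonneg fun _ _ => sq_nonneg _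

lemma l2sq_pos {ι : Type*} [Fintype ι] (v : ι → ℝ) (hv : v ≠ 0) : 0 < l2sq v := by
  rcases Function.ne_iff.mp hv with ⟨i, hi⟩
  have : (0:ℝ) < v i ^ 2 := by
    have := hi
    simp only [Pi.zero_apply] at this
    positivity
  exact this.trans_le (Finset.single_le_sum (fun j _ => sq_nonneg (v j)) (Finset.mem_univ i))

lemma ip_mulVec {ι κ : Type*} [Fintype ι] [Fintype κ] (M : Matrix ι κ ℝ) (r : ι → ℝ)
    (h : κ → ℝ) : ip r (M *ᵥ h) = ip (Mᵀ *ᵥ r) h := by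
  simp only [ip, mulVec, dotProduct, Finset.mul_sum, Finset.sum_mul, transpose_apply]
  rw [Finset.sum_comm]
  exact Finset.sum_congr rfl fun j _ => Finset.sum_congr rfl fun i _ => by ring

lemma l1_restr {n : ℕ} (S : Finset (Fin n)) (v : Fin n → ℝ) :
    l1 (restr S v) = ∑ j ∈ S, |v j| := by
  simp only [l1, restr, apply_ite abs, abs_zero]
  exact Fintype.sum_ite_mem S fun j => |v j|

set_option maxHeartbeats 1000000 in
theorem stmt17 {m n : ℕ} (A : Matrix (Fin m) (Fin n) ℝ) (S : Finset (Fin n))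
    (AS : Matrix (Fin m) {j : Fin n // j ∈ S} ℝ)
    (ASb : Matrix (Fin m) {j : Fin n // j ∉ S} ℝ)
    (hASdef : ∀ i j, AS i j = A i j.1) (hASbdef : ∀ i j, ASb i j = A i j.1)
    (xt xstar : Fin n → ℝ) (y : Fin m → ℝ) (lam d μ ω φ α ε : ℝ)
    (hlam : 0 < lam) (hd : 0 < d) (hμ0 : 0 < μ) (hμ1 : μ ≤ 1)
    (hω : 0 < ω) (hα : 0 < α) (hε : 0 < ε) (hφlam : lam < φ)
    -- noise-free measurements
    (hy : y = A *ᵥ xt)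
    -- x̃ supported on S, entries in [−d,d], min nonzero magnitude μd
    (hsupp : ∀ j, j ∉ S → xt j = 0)
    (hbox : ∀ j, |xt j| ≤ d)
    (hmin : ∀ j ∈ S, μ * d ≤ |xt j|)
    -- A_S has full column rank and A_Sᵀ A_S − λI is invertible
    (hrank : AS.rank = S.card)
    (hinv : IsUnit (ASᵀ * AS - lam • (1 : Matrix {j : Fin n // j ∈ S} {j : Fin n // j ∈ S} ℝ)).det)
    -- definition of x* and sign agreement
    (hxstarS : ∀ j : {j : Fin n // j ∈ S}, xstar j.1 = xt j.1 +
      ((ASᵀ * AS - lam • (1 : Matrix {j : Fin n // j ∈ S} {j : Fin n // j ∈ S} ℝ))⁻¹ *ᵥ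
        (fun i : {j : Fin n // j ∈ S} => lam * xt i.1 - lam * d * Real.sign (xstar i.1))) j)
    (hxstarSc : ∀ j, j ∉ S → xstar j = 0)
    (hsign : ∀ j ∈ S, Real.sign (xstar j) = Real.sign (xt j))
    -- (i) irrepresentable condition
    (hirr : op1 ((ASᵀ * AS)⁻¹ * ASᵀ * ASb) < 1 / ω)
    -- (ii) restricted eigenvalue condition on the cone C(α,S)
    (hRE : ∀ v : Fin n → ℝ, v ≠ 0 → l1 (restr Sᶜ v) ≤ α * l1 (restr S v) →
      φ * l2sq v ≤ l2sq (A *ᵥ v))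
    -- (iii) condition C3 (noise-free)
    (hq : lam * d - (1 / ω) *
        opInf ((ASᵀ * AS) *
          (ASᵀ * AS - lam • (1 : Matrix {j : Fin n // j ∈ S} {j : Fin n // j ∈ S} ℝ))⁻¹) *
        (lam * d * (1 - μ)) > lam * ε * (1 + α) / α)
    -- objective functional
    (F : (Fin n → ℝ) → ℝ)
    (hF : ∀ z, F z = (1 / 2) * l2sq (y - A *ᵥ z) + lam * (d * l1 z - (1 / 2) * l2sq z)) :
    ∀ h : Fin n → ℝ, h ≠ 0 → linf h ≤ ε → (∀ j ∈ S, |h j| < |xstar j|) →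
      F (xstar + h) > F xstar := by
  intro h hne hinf hlt
  -- names
  set G : Matrix {j : Fin n // j ∈ S} {j : Fin n // j ∈ S} ℝ := ASᵀ * AS with hGdef
  set M : Matrix {j : Fin n // j ∈ S} {j : Fin n // j ∈ S} ℝ :=
    G - lam • (1 : Matrix {j : Fin n // j ∈ S} {j : Fin n // j ∈ S} ℝ) with hMdef
  set u : {j : Fin n // j ∈ S} → ℝ :=
    fun i => lam * xt i.1 - lam * d * Real.sign (xstar i.1) with hudef
  set g : {j : Fin n // j ∈ S} → ℝ := M⁻¹ *ᵥ u with hgdef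
  have hx : ∀ j : {j : Fin n // j ∈ S}, xstar j.1 = xt j.1 + g j := hxstarS
  -- G *ᵥ g
  have hMg : M *ᵥ g = u := by
    rw [hgdef, mulVec_mulVec, Matrix.mul_nonsing_inv _ hinv, one_mulVec]
  have hGg : ∀ i : {j : Fin n // j ∈ S},
      (G *ᵥ g) i = lam * xstar i.1 - lam * d * Real.sign (xstar i.1) := by
    intro i
    have h1 : (M *ᵥ g) i = (G *ᵥ g) i - lam * g i := by
      rw [hMdef, sub_mulVec, smul_mulVec, one_mulVec]
      simp
    have h2 : (M *ᵥ g) i = u i := by rw [hMg]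
    have h3 := hx i
    rw [h1] at h2
    rw [hudef] at h2
    simp only at h2
    have h4 : lam * xstar i.1 = lam * xt i.1 + lam * g i := by rw [h3]; ring
    linarith
  -- residual
  have hrAS : ∀ i, (y - A *ᵥ xstar) i = -((AS *ᵥ g) i) := by
    intro i
    have : (y - A *ᵥ xstar) i = ∑ k, A i k * (xt k - xstar k) := by
      rw [hy]
      simp only [Pi.sub_apply, mulVec, dotProduct, ← Finset.sum_sub_distrib]
      exact Finset.sum_congr rfl fun k _ => by ring
    rw [this]
    have hzero : ∀ k ∈ Sᶜ, A i k * (xt k - xstar k) = 0 := by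
      intro k hk
      rw [Finset.mem_compl] at hk
      rw [hsupp k hk, hxstarSc k hk]
      ring
    have hsplit : ∑ k, A i k * (xt k - xstar k) = ∑ k ∈ S, A i k * (xt k - xstar k) := by
      rw [← Finset.sum_add_sum_compl S (fun k => A i k * (xt k - xstar k)),
        Finset.sum_eq_zero hzero, add_zero]
    rw [hsplit, Finset.sum_subtype S (fun x => Iff.rfl) (fun k => A i k * (xt k - xstar k))]
    rw [mulVec, dotProduct, ← Finset.sum_neg_distrib]
    refine Finset.sum_congr rfl fun k _ => ?_
    rw [hASdef i k]
    linear_combination (-(A i k.1)) * hx k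
  have hrfun : y - A *ᵥ xstar = fun i => -((AS *ᵥ g) i) := funext hrAS
  -- transpose residual on S
  have hAtr_on : ∀ (j : Fin n) (hj : j ∈ S),
      (Aᵀ *ᵥ (y - A *ᵥ xstar)) j = lam * d * Real.sign (xstar j) - lam * xstar j := by
    intro j hj
    have e1 : (Aᵀ *ᵥ (y - A *ᵥ xstar)) j = ∑ i, A i j * (-((AS *ᵥ g) i)) := by
      rw [hrfun, mulVec, dotProduct]
      exact Finset.sum_congr rfl fun i _ => by rw [transpose_apply]
    have e2 : ∑ i, A i j * (-((AS *ᵥ g) i)) = -((ASᵀ *ᵥ (AS *ᵥ g)) ⟨j, hj⟩) := by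
      rw [mulVec, dotProduct, ← Finset.sum_neg_distrib]
      refine Finset.sum_congr rfl fun i _ => ?_
      rw [transpose_apply, hASdef i ⟨j, hj⟩]
      ring
    have e3 : (ASᵀ *ᵥ (AS *ᵥ g)) ⟨j, hj⟩ = (G *ᵥ g) ⟨j, hj⟩ := by
      rw [mulVec_mulVec, hGdef]
    rw [e1, e2, e3, hGg ⟨j, hj⟩]
    ring
  -- invertibility of G
  have hGdet : IsUnit G.det := by
    apply isUnit_det_of_rank_eq_card
    rw [hGdef, Matrix.rank_transpose_mul_self, hrank]
    exact (Fintype.card_coe S).symm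
  have hGsymm : Gᵀ = G := by rw [hGdef, transpose_mul, transpose_transpose]
  -- factorization of ASbᵀ * AS
  have hQfact : ASbᵀ * AS = (G⁻¹ * ASᵀ * ASb)ᵀ * G := by
    have e1 : (G⁻¹ * ASᵀ * ASb)ᵀ = ASbᵀ * (AS * G⁻¹) := by
      rw [transpose_mul, transpose_mul, transpose_transpose, transpose_nonsing_inv, hGsymm]
    rw [e1, Matrix.mul_assoc, Matrix.mul_assoc, Matrix.nonsing_inv_mul _ hGdet,
      Matrix.mul_one]
  -- bound off S
  have hu_bound : ∀ i : {j : Fin n // j ∈ S}, |u i| ≤ lam * d * (1 - μ) := by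
    intro i
    have hs := hsign i.1 i.2
    have hm := hmin i.1 i.2
    have hb := hbox i.1
    have hui : u i = lam * xt i.1 - lam * d * Real.sign (xt i.1) := by
      rw [hudef]
      simp only
      rw [hs]
    rcases lt_trichotomy (xt i.1) 0 with hneg | hzero | hpos
    · rw [hui, Real.sign_of_neg hneg]
      have habs := abs_of_neg hneg
      rw [habs] at hb hm
      rw [abs_of_nonneg (by nlinarith)]
      nlinarith
    · exfalso
      rw [hzero] at hm
      simp only [abs_zero] at hm
      nlinarith
    · rw [hui, Real.sign_of_pos hpos]
      have habs := abs_of_pos hpos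
      rw [habs] at hb hm
      rw [abs_of_nonpos (by nlinarith)]
      nlinarith
  have hlinfu : linf u ≤ lam * d * (1 - μ) := by
    refine linf_le u hu_bound ?_
    have : 0 ≤ 1 - μ := by linarith
    positivity
  have hGg_linf : linf (G *ᵥ g) ≤ opInf (G * M⁻¹) * (lam * d * (1 - μ)) := by
    have e1 : G *ᵥ g = (G * M⁻¹) *ᵥ u := by rw [hgdef, mulVec_mulVec]
    rw [e1]
    calc linf ((G * M⁻¹) *ᵥ u) ≤ opInf (G * M⁻¹) * linf u := linf_mulVec_le _ _
      _ ≤ opInf (G * M⁻¹) * (lam * d * (1 - μ)) :=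
          mul_le_mul_of_nonneg_left hlinfu (opInf_nonneg _)
  have hAtr_off : ∀ (j : Fin n) (hj : j ∉ S),
      |(Aᵀ *ᵥ (y - A *ᵥ xstar)) j| ≤
        1 / ω * opInf (G * M⁻¹) * (lam * d * (1 - μ)) := by
    intro j hj
    have e1 : (Aᵀ *ᵥ (y - A *ᵥ xstar)) j = -(((G⁻¹ * ASᵀ * ASb)ᵀ *ᵥ (G *ᵥ g)) ⟨j, hj⟩) := by
      have e2 : (Aᵀ *ᵥ (y - A *ᵥ xstar)) j = -((ASbᵀ *ᵥ (AS *ᵥ g)) ⟨j, hj⟩) := by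
        rw [hrfun, mulVec, dotProduct, mulVec, dotProduct, ← Finset.sum_neg_distrib]
        refine Finset.sum_congr rfl fun i _ => ?_
        rw [transpose_apply, transpose_apply, hASbdef i ⟨j, hj⟩]
        ring
      rw [e2, mulVec_mulVec, hQfact, ← mulVec_mulVec]
    rw [e1, abs_neg]
    calc |(((G⁻¹ * ASᵀ * ASb)ᵀ) *ᵥ (G *ᵥ g)) ⟨j, hj⟩|
        ≤ opInf ((G⁻¹ * ASᵀ * ASb)ᵀ) * linf (G *ᵥ g) := abs_mulVec_le _ _ _
      _ = op1 (G⁻¹ * ASᵀ * ASb) * linf (G *ᵥ g) := by rw [opInf_transpose]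
      _ ≤ 1 / ω * linf (G *ᵥ g) :=
          mul_le_mul_of_nonneg_right (le_of_lt hirr) (linf_nonneg _)
      _ ≤ 1 / ω * (opInf (G * M⁻¹) * (lam * d * (1 - μ))) :=
          mul_le_mul_of_nonneg_left hGg_linf (by positivity)
      _ = 1 / ω * opInf (G * M⁻¹) * (lam * d * (1 - μ)) := by ring
  -- notation for the rest
  set B : ℝ := 1 / ω * opInf (G * M⁻¹) * (lam * d * (1 - μ)) with hBdef
  set t : Fin n → ℝ := Aᵀ *ᵥ (y - A *ᵥ xstar) with htdef
  set T : ℝ := ∑ j ∈ Sᶜ, |h j| with hTdef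
  set TS : ℝ := ∑ j ∈ S, |h j| with hTSdef
  have hTnn : 0 ≤ T := Finset.sum_nonneg fun _ _ => abs_nonneg _
  have hTSnn : 0 ≤ TS := Finset.sum_nonneg fun _ _ => abs_nonneg _
  -- l1 difference
  have hl1S : ∀ j ∈ S, |xstar j + h j| = |xstar j| + Real.sign (xstar j) * h j := by
    intro j hj
    have hlt' := hlt j hj
    rcases lt_trichotomy (xstar j) 0 with hneg | hzero | hpos
    · rw [Real.sign_of_neg hneg, abs_of_neg hneg]
      rw [abs_of_neg hneg] at hlt'
      have := abs_lt.mp hlt'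
      rw [abs_of_neg (by linarith [this.2] : xstar j + h j < 0)]
      ring
    · exfalso; rw [hzero] at hlt'; simp only [abs_zero] at hlt'
      exact absurd hlt' (not_lt.mpr (abs_nonneg _))
    · rw [Real.sign_of_pos hpos, abs_of_pos hpos]
      rw [abs_of_pos hpos] at hlt'
      have := abs_lt.mp hlt'
      rw [abs_of_pos (by linarith [this.1] : 0 < xstar j + h j)]
      ring
  have hl1diff : l1 (xstar + h) = l1 xstar + ((∑ j ∈ S, Real.sign (xstar j) * h j) + T) := by
    have e1 : l1 (xstar + h) =
        (∑ j ∈ S, (|xstar j| + Real.sign (xstar j) * h j)) + ∑ j ∈ Sᶜ, |h j| := by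
      rw [l1, ← Finset.sum_add_sum_compl S (fun j => |(xstar + h) j|)]
      congr 1
      · exact Finset.sum_congr rfl fun j hj => by rw [Pi.add_apply, hl1S j hj]
      · refine Finset.sum_congr rfl fun j hj => ?_
        rw [Pi.add_apply, hxstarSc j (Finset.mem_compl.mp hj), zero_add]
    have e2 : l1 xstar = ∑ j ∈ S, |xstar j| := by
      rw [l1, ← Finset.sum_add_sum_compl S (fun j => |xstar j|)]
      have : ∑ j ∈ Sᶜ, |xstar j| = 0 :=
        Finset.sum_eq_zero fun j hj => by
          rw [hxstarSc j (Finset.mem_compl.mp hj), abs_zero]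
      rw [this, add_zero]
    rw [e1, e2, Finset.sum_add_distrib, hTdef]
    ring
  -- inner products
  have hipx : ip xstar h = ∑ j ∈ S, xstar j * h j := by
    rw [ip, ← Finset.sum_add_sum_compl S (fun j => xstar j * h j)]
    have : ∑ j ∈ Sᶜ, xstar j * h j = 0 :=
      Finset.sum_eq_zero fun j hj => by
        rw [hxstarSc j (Finset.mem_compl.mp hj), zero_mul]
    rw [this, add_zero]
  have hipt : ip t h = (∑ j ∈ S, (lam * d * Real.sign (xstar j) - lam * xstar j) * h j)
      + ∑ j ∈ Sᶜ, t j * h j := by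
    rw [ip, ← Finset.sum_add_sum_compl S (fun j => t j * h j)]
    congr 1
    refine Finset.sum_congr rfl fun j hj => ?_
    rw [hAtr_on j hj]
  -- expansion of the objective difference
  have hFd : F (xstar + h) - F xstar = 1/2 * l2sq (A *ᵥ h) - ip t h
      + lam * d * ((∑ j ∈ S, Real.sign (xstar j) * h j) + T)
      - lam * ip xstar h - lam/2 * l2sq h := by
    rw [hF, hF]
    have e1 : y - A *ᵥ (xstar + h) = (y - A *ᵥ xstar) - A *ᵥ h := by
      rw [mulVec_add]; abel
    rw [e1, l2sq_sub, ip_mulVec, l2sq_add xstar h, hl1diff]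
    rw [htdef]
    ring
  have hcomb : ∑ j ∈ S, (lam * d * Real.sign (xstar j) - lam * xstar j) * h j
      = lam * d * (∑ j ∈ S, Real.sign (xstar j) * h j) - lam * (∑ j ∈ S, xstar j * h j) := by
    rw [Finset.mul_sum, Finset.mul_sum, ← Finset.sum_sub_distrib]
    exact Finset.sum_congr rfl fun j _ => by ring
  have hFd2 : F (xstar + h) - F xstar = 1/2 * l2sq (A *ᵥ h) - lam/2 * l2sq h
      + lam * d * T - ∑ j ∈ Sᶜ, t j * h j := by
    rw [hFd, hipt, hipx, hcomb]
    ring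
  -- bound the off-support term
  have hboundsum : ∑ j ∈ Sᶜ, t j * h j ≤ B * T := by
    rw [hTdef, Finset.mul_sum]
    refine Finset.sum_le_sum fun j hj => ?_
    calc t j * h j ≤ |t j * h j| := le_abs_self _
      _ = |t j| * |h j| := abs_mul _ _
      _ ≤ B * |h j| :=
          mul_le_mul_of_nonneg_right (hAtr_off j (Finset.mem_compl.mp hj)) (abs_nonneg _)
  have hlow : F (xstar + h) - F xstar ≥
      1/2 * l2sq (A *ᵥ h) - lam/2 * l2sq h + (lam * d - B) * T := by
    rw [hFd2]; linarith [hboundsum]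
  -- condition C3
  have hc : lam * ε * (1 + α) / α < lam * d - B := by rw [hBdef]; linarith [hq]
  have hcpos : 0 < lam * d - B := lt_trans (by positivity) hc
  have hc' : lam * ε * (1 + α) < (lam * d - B) * α := by
    rw [div_lt_iff₀ hα] at hc; linarith
  rw [gt_iff_lt, ← sub_pos]
  have hTr : l1 (restr Sᶜ h) = T := by rw [l1_restr, hTdef]
  have hTSr : l1 (restr S h) = TS := by rw [l1_restr, hTSdef]
  rcases le_or_gt (l1 (restr Sᶜ h)) (α * l1 (restr S h)) with hcone | hcone
  · -- cone case: use restricted eigenvalue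
    have hre := hRE h hne hcone
    have hl2 := l2sq_pos h hne
    nlinarith [hlow, hre, hl2, mul_nonneg hcpos.le hTnn,
      mul_pos (sub_pos.mpr hφlam) hl2]
  · -- outside the cone
    rw [hTr, hTSr] at hcone
    have hT_pos : 0 < T := lt_of_le_of_lt (mul_nonneg hα.le hTSnn) hcone
    have hl2h : l2sq h ≤ ε * (TS + T) := by
      have e1 : ∀ j, (h j) ^ 2 ≤ |h j| * ε := by
        intro j
        have h1 : |h j| ≤ ε := (abs_le_linf h j).trans hinf
        have h2 : (h j) ^ 2 = |h j| * |h j| := by rw [← abs_mul, abs_mul_self]; ring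
        rw [h2]
        exact mul_le_mul_of_nonneg_left h1 (abs_nonneg _)
      calc l2sq h ≤ ∑ j, |h j| * ε := Finset.sum_le_sum fun j _ => e1 j
        _ = (∑ j, |h j|) * ε := (Finset.sum_mul _ _ _).symm
        _ = (TS + T) * ε := by
            rw [hTSdef, hTdef, Finset.sum_add_sum_compl]
        _ = ε * (TS + T) := by ring
    have key2 : lam/2 * (ε * (TS + T)) < (lam * d - B) * T := by
      nlinarith [mul_lt_mul_of_pos_right hc' hT_pos,
        mul_lt_mul_of_pos_left hcone (show (0:ℝ) < lam * ε / 2 by positivity),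
        mul_pos hT_pos (mul_pos hlam hε), hα, hT_pos]
    nlinarith [hlow, l2sq_nonneg (A *ᵥ h), hl2h, key2,
      mul_le_mul_of_nonneg_left hl2h (show (0:ℝ) ≤ lam/2 by positivity)]
end
end
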